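/- Let u_1,…,u_k be an orthonormal basis of ℝ^k, let U = [u_1,…,u_d], Λ = diag(λ_1,…,λ_d) with λ_j = σ²ρ_j for distinct positive reals ρ_1,…,ρ_d, and define Ξ_i = Σ_{j≠i, 1≤j≤k} ( μ_i μ_j / (μ_i − μ_j)² ) u_j u_jᵀ where μ_j = σ²(1+ρ_j) for j ≤ d and μ_j = σ² for j > d. Then for each i ≤ d, tr( (σ²I_k + UΛUᵀ)(Ξ_i + u_i u_iᵀ) ) = σ²(1+ρ_i) [ 1 + (k−d)/ρ_i² + Σ_{j≤d, j≠i} (1+ρ_j)²/(ρ_i − ρ_j)² ]. (This is the trace computation giving the O(1/w) correction term of the post-change expected increment in the proof of the post-change increment lemma.) -/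

import Mathlib

open Matrix BigOperators

lemma trace_mul_vecMulVec {k : ℕ} (A : Matrix (Fin k) (Fin k) ℝ) (x y : Fin k → ℝ) :
    (A * Matrix.vecMulVec x y).trace = y ⬝ᵥ (A *ᵥ x) := by
  simp only [Matrix.trace, Matrix.diag, Matrix.mul_apply, Matrix.vecMulVec_apply,
    Matrix.mulVec, dotProduct, Finset.mul_sum]
  exact Finset.sum_congr rfl fun a _ => Finset.sum_congr rfl fun b _ => by ring

lemma vecMulVec_mulVec' {k : ℕ} (x y v : Fin k → ℝ) :
    Matrix.vecMulVec x y *ᵥ v = (y ⬝ᵥ v) • x := by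
  ext r
  simp only [Matrix.vecMulVec_apply, Matrix.mulVec, dotProduct, Pi.smul_apply, smul_eq_mul,
    Finset.sum_mul]
  exact Finset.sum_congr rfl fun b _ => by ring

lemma sum_mulVec' {k d : ℕ} (A : Fin d → Matrix (Fin k) (Fin k) ℝ) (v : Fin k → ℝ) :
    (∑ m : Fin d, A m) *ᵥ v = ∑ m : Fin d, A m *ᵥ v := by
  ext r
  simp [Matrix.mulVec, dotProduct, Matrix.sum_apply, Finset.sum_mul]
  rw [Finset.sum_comm]

/-- Trace computation for the `O(1/w)` correction of the post-change increment:
`tr((σ²I_k + UΛUᵀ)(Ξ_i + u_iu_iᵀ))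
  = σ²(1+ρ_i)[1 + (k−d)/ρ_i² + Σ_{j≤d, j≠i} (1+ρ_j)²/(ρ_i−ρ_j)²]`,
where `Ξ_i = Σ_{j≠i} (μ_iμ_j/(μ_i−μ_j)²) u_ju_jᵀ` with `μ_j = σ²(1+ρ_j)` for `j ≤ d`
and `μ_j = σ²` for `j > d`, and `λ_j = σ²ρ_j`. -/
theorem post_change_increment_trace (k d : ℕ) (hd : 0 < d) (hdk : d ≤ k)
    (σ2 : ℝ) (hσ2 : 0 < σ2)
    (u : Fin k → Fin k → ℝ)
    (hu : ∀ i j : Fin k, u i ⬝ᵥ u j = if i = j then (1 : ℝ) else 0)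
    (ρ : Fin d → ℝ) (hρ : ∀ i, 0 < ρ i) (hρinj : Function.Injective ρ)
    (lam : Fin d → ℝ) (hlam : ∀ i, lam i = σ2 * ρ i)
    (μ : Fin k → ℝ)
    (hμ : ∀ j : Fin k, μ j = if h : (j : ℕ) < d then σ2 * (1 + ρ ⟨j, h⟩) else σ2)
    (U : Matrix (Fin k) (Fin d) ℝ)
    (hUdef : ∀ (r : Fin k) (j : Fin d), U r j = u (Fin.castLE hdk j) r)
    (Xi : Fin d → Matrix (Fin k) (Fin k) ℝ)
    (hXi : ∀ i : Fin d, Xi i =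
      ∑ j ∈ Finset.univ.erase (Fin.castLE hdk i),
        (μ (Fin.castLE hdk i) * μ j / (μ (Fin.castLE hdk i) - μ j) ^ 2) •
          Matrix.vecMulVec (u j) (u j))
    (i : Fin d) :
    ((σ2 • (1 : Matrix (Fin k) (Fin k) ℝ) + U * Matrix.diagonal lam * Uᵀ) *
        (Xi i + Matrix.vecMulVec (u (Fin.castLE hdk i)) (u (Fin.castLE hdk i)))).trace
      = σ2 * (1 + ρ i) *
          (1 + ((k : ℝ) - (d : ℝ)) / ρ i ^ 2
            + ∑ j ∈ Finset.univ.erase i, (1 + ρ j) ^ 2 / (ρ i - ρ j) ^ 2) := by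
  set Sg : Matrix (Fin k) (Fin k) ℝ :=
    σ2 • (1 : Matrix (Fin k) (Fin k) ℝ) + U * Matrix.diagonal lam * Uᵀ with hSg
  -- decomposition of U Λ Uᵀ as sum of rank-one projections
  have hSplit : U * Matrix.diagonal lam * Uᵀ
      = ∑ m : Fin d, lam m • Matrix.vecMulVec (u (Fin.castLE hdk m)) (u (Fin.castLE hdk m)) := by
    ext r s
    simp only [Matrix.mul_apply, Matrix.diagonal_apply, Matrix.transpose_apply,
      Finset.sum_apply, Pi.smul_apply, Matrix.vecMulVec_apply, smul_eq_mul,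
      Matrix.sum_apply, hUdef]
    refine Finset.sum_congr rfl fun m _ => ?_
    rw [Finset.sum_eq_single m (fun n _ hn => by simp [hn]) (by simp)]
    simp [Matrix.smul_apply, Matrix.vecMulVec_apply, hUdef]
    ring
  -- eigenvector property
  have hEig : ∀ j : Fin k, Sg *ᵥ u j = μ j • u j := by
    intro j
    rw [hSg, Matrix.add_mulVec, smul_mulVec, Matrix.one_mulVec, hSplit, sum_mulVec']
    have hterm : ∀ m : Fin d,
        (lam m • Matrix.vecMulVec (u (Fin.castLE hdk m)) (u (Fin.castLE hdk m))) *ᵥ u j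
          = (if ((m : ℕ) : ℕ) = (j : ℕ) then lam m else 0) • u j := by
      intro m
      rw [smul_mulVec, vecMulVec_mulVec', hu]
      by_cases h : Fin.castLE hdk m = j
      · rw [if_pos h, if_pos (show ((m : ℕ) : ℕ) = (j : ℕ) by rw [← h]; rfl), h]
        simp
      · rw [if_neg h, if_neg (show ¬((m : ℕ) : ℕ) = (j : ℕ) from
          fun hc => h (Fin.ext (by simpa using hc)))]
        simp
    rw [Finset.sum_congr rfl fun m _ => hterm m, ← Finset.sum_smul, hμ]
    by_cases h : (j : ℕ) < d
    · rw [dif_pos h, Finset.sum_eq_single (⟨(j : ℕ), h⟩ : Fin d)]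
      · rw [if_pos rfl, ← add_smul]
        congr 1
        rw [hlam]; ring
      · intro n _ hn
        rw [if_neg (fun hc => hn (Fin.ext hc))]
      · simp
    · rw [dif_neg h, Finset.sum_eq_zero, zero_smul, add_zero]
      intro n _
      rw [if_neg (show ¬((n : ℕ) : ℕ) = (j : ℕ) from fun hc => h (by rw [← hc]; exact n.isLt))]
  -- trace of Sg times rank-one projector
  have hTr : ∀ j : Fin k, (Sg * Matrix.vecMulVec (u j) (u j)).trace = μ j := by
    intro j
    rw [trace_mul_vecMulVec, hEig, dotProduct_smul, hu, if_pos rfl]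
    simp
  have hμi : μ (Fin.castLE hdk i) = σ2 * (1 + ρ i) := by
    rw [hμ, dif_pos (show ((Fin.castLE hdk i : Fin k) : ℕ) < d from i.isLt)]
    simp
  -- expand the trace
  rw [mul_add, trace_add, hXi, Finset.mul_sum, trace_sum]
  have hstep : ∀ j ∈ Finset.univ.erase (Fin.castLE hdk i),
      (Sg * ((μ (Fin.castLE hdk i) * μ j / (μ (Fin.castLE hdk i) - μ j) ^ 2) •
          Matrix.vecMulVec (u j) (u j))).trace
        = μ (Fin.castLE hdk i) * μ j / (μ (Fin.castLE hdk i) - μ j) ^ 2 * μ j := by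
    intro j _
    rw [mul_smul_comm, trace_smul, hTr, smul_eq_mul]
  rw [Finset.sum_congr rfl hstep, hTr]
  -- now pure arithmetic
  set G : Fin d → ℝ := fun m => σ2 * (1 + ρ i) * ((1 + ρ m) ^ 2 / (ρ i - ρ m) ^ 2) with hG
  set C : ℝ := σ2 * (1 + ρ i) / ρ i ^ 2 with hC
  set F : ℕ → ℝ := fun n => if h : n < d then G ⟨n, h⟩ else C with hF
  have hf : ∀ j : Fin k, μ (Fin.castLE hdk i) * μ j / (μ (Fin.castLE hdk i) - μ j) ^ 2 * μ j
      = F (j : ℕ) := by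
    intro j
    rw [hμi]
    simp only [hμ, hF]
    by_cases h : (j : ℕ) < d
    · simp only [dif_pos h, hG]
      rcases eq_or_ne (ρ i) (ρ ⟨(j : ℕ), h⟩) with he | he
      · rw [he]; simp
      · have hden : σ2 * (1 + ρ i) - σ2 * (1 + ρ ⟨(j : ℕ), h⟩) ≠ 0 := by
          intro hc
          apply he
          have := hσ2.ne'
          nlinarith [hc]
        have hd2 : ρ i - ρ ⟨(j : ℕ), h⟩ ≠ 0 := sub_ne_zero.mpr he
        rw [show σ2 * (1 + ρ i) - σ2 * (1 + ρ ⟨(j : ℕ), h⟩) = σ2 * (ρ i - ρ ⟨(j : ℕ), h⟩) by ring]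
        field_simp
    · simp only [dif_neg h, hC]
      have hρi : ρ i ≠ 0 := (hρ i).ne'
      have hden : σ2 * (1 + ρ i) - σ2 ≠ 0 := by
        intro hc; apply hρi; nlinarith
      rw [show σ2 * (1 + ρ i) - σ2 = σ2 * ρ i by ring]
      field_simp
  rw [Finset.sum_congr rfl fun j hj => hf j,
    Finset.sum_erase_eq_sub (Finset.mem_univ _)]
  have hFi : F ((Fin.castLE hdk i : Fin k) : ℕ) = 0 := by
    rw [hF]
    simp only [Fin.coe_castLE]
    rw [dif_pos i.isLt, hG]
    simp [Fin.eta]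
  have hsum : ∑ j : Fin k, F (j : ℕ)
      = (∑ m ∈ Finset.univ.erase i, G m) + ((k : ℝ) - (d : ℝ)) * C := by
    rw [Fin.sum_univ_eq_sum_range F k, Finset.range_eq_Ico,
      ← Finset.sum_Ico_consecutive F (Nat.zero_le d) hdk, ← Finset.range_eq_Ico,
      ← Fin.sum_univ_eq_sum_range F d]
    have h1 : ∑ m : Fin d, F (m : ℕ) = ∑ m : Fin d, G m := by
      refine Finset.sum_congr rfl fun m _ => ?_
      simp only [hF, Fin.is_lt, dif_pos, Fin.eta]
    have h2 : ∑ n ∈ Finset.Ico d k, F n = ((k : ℝ) - (d : ℝ)) * C := by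
      have hcc : ∀ n ∈ Finset.Ico d k, F n = C := fun n hn => by
        simp only [hF]; exact dif_neg (Nat.not_lt.mpr (Finset.mem_Ico.mp hn).1)
      rw [Finset.sum_congr rfl hcc, Finset.sum_const, Nat.card_Ico, nsmul_eq_mul,
        Nat.cast_sub hdk]
    rw [h1, h2]
    congr 1
    rw [← Finset.add_sum_erase _ G (Finset.mem_univ i)]
    have hGi : G i = 0 := by simp only [hG]; simp
    rw [hGi, zero_add]
  rw [hsum, hμi, hFi, sub_zero]
  simp only [hG, hC]
  rw [← Finset.mul_sum]
  ring
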